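/- Let 0 < p < 1 < q with p + q = 2, let μ₁ > 0, μ₂ > 0, 0 < μ₃ < ∞, and let τ ∈ (0,1). Suppose V : [0,∞) → [0,∞) is differentiable and satisfies V'(t) ≤ -μ₁·V(t)^p - μ₂·V(t)^q + μ₃ for all t ≥ 0. Define T̄ = 1/((1-p)·√(τμ₁μ₂)) and T* = T̄ · max{ π/2 - arctan( √(μ₂/(τμ₁)) · (μ₃/((1-τ)μ₁))^((1-p)/p) ) , π/2 - arctan( √(τμ₂/μ₁) · (μ₃/((1-τ)μ₂))^((1-p)/(2-p)) ) }. Then for every t ≥ T* one has V(t) ≤ R, where R = min{ (μ₃/((1-τ)μ₁))^(1/p) , (μ₃/((1-τ)μ₂))^(1/q) } (Lemma 2). -/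

import Mathlib

open Real

/-- Key algebraic identity used for the arctan Lyapunov trick. -/
lemma key_alg (p a b v : ℝ) (hp : 0 < p) (hp1 : p < 1) (ha : 0 < a) (hb : 0 < b)
    (hv : 0 < v) :
    (1 / (1 + (Real.sqrt (b / a) * v ^ (1 - p)) ^ 2)) *
      (Real.sqrt (b / a) * ((1 - p) * v ^ ((1 - p) - 1) * (a * v ^ p + b * v ^ (2 - p))))
      = (1 - p) * Real.sqrt (a * b) := by
  have hK : (0:ℝ) < Real.sqrt (b / a) := Real.sqrt_pos.mpr (div_pos hb ha)
  have hK2 : (Real.sqrt (b / a)) ^ 2 = b / a := Real.sq_sqrt (div_nonneg hb.le ha.le)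
  have hKa : Real.sqrt (b / a) * a = Real.sqrt (a * b) := by
    rw [show a * b = (b / a) * a ^ 2 by field_simp, Real.sqrt_mul (div_nonneg hb.le ha.le),
      Real.sqrt_sq ha.le]
  have hvk : v ^ ((1 - p) - 1) * v ^ p = 1 := by
    rw [← Real.rpow_add hv]
    norm_num
  have hvq : v ^ ((1 - p) - 1) * v ^ (2 - p) = (v ^ (1 - p)) ^ 2 := by
    rw [sq, ← Real.rpow_add hv, ← Real.rpow_add hv]
    congr 1; ring
  set w := v ^ (1 - p) with hw
  have hwpos : 0 < w := Real.rpow_pos_of_pos hv _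
  have expand : v ^ ((1 - p) - 1) * (a * v ^ p + b * v ^ (2 - p)) = a + b * w ^ 2 := by
    rw [mul_add, show v ^ ((1 - p) - 1) * (a * v ^ p) = a * (v ^ ((1 - p) - 1) * v ^ p) by ring,
      hvk, show v ^ ((1 - p) - 1) * (b * v ^ (2 - p)) = b * (v ^ ((1 - p) - 1) * v ^ (2 - p)) by
        ring, hvq]
    ring
  have hre : Real.sqrt (b / a) * ((1 - p) * v ^ ((1 - p) - 1) * (a * v ^ p + b * v ^ (2 - p)))
      = Real.sqrt (b / a) * ((1 - p) * (a + b * w ^ 2)) := by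
    rw [show (1 - p) * v ^ ((1 - p) - 1) * (a * v ^ p + b * v ^ (2 - p))
        = (1 - p) * (v ^ ((1 - p) - 1) * (a * v ^ p + b * v ^ (2 - p))) by ring, expand]
  rw [hre, mul_pow, hK2, ← hKa]
  have hden : (0:ℝ) < 1 + b / a * w ^ 2 := by positivity
  field_simp

/-- Auxiliary settling lemma: if whenever `V > R` the derivative satisfies
`V' ≤ -(a V^p + b V^{2-p})`, then `V t ≤ R` after the arctan settling time. -/
lemma settling_aux (p a b R : ℝ) (hp : 0 < p) (hp1 : p < 1)
    (ha : 0 < a) (hb : 0 < b) (hR : 0 < R)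
    (V : ℝ → ℝ) (hVdiff : Differentiable ℝ V)
    (hdrift : ∀ s, 0 ≤ s → R < V s →
      deriv V s ≤ -(a * V s ^ p + b * V s ^ (2 - p))) :
    ∀ t, (π / 2 - Real.arctan (Real.sqrt (b / a) * R ^ (1 - p))) /
        ((1 - p) * Real.sqrt (a * b)) ≤ t → V t ≤ R := by
  set K := Real.sqrt (b / a) with hKdef
  set c := Real.sqrt (a * b) with hcdef
  have hK : (0:ℝ) < K := Real.sqrt_pos.mpr (div_pos hb ha)
  have hc : (0:ℝ) < c := Real.sqrt_pos.mpr (mul_pos ha hb)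
  have hk : (0:ℝ) < 1 - p := by linarith
  have hkc : (0:ℝ) < (1 - p) * c := mul_pos hk hc
  intro t ht
  have hTpos : 0 < π / 2 - Real.arctan (K * R ^ (1 - p)) :=
    sub_pos.mpr (Real.arctan_lt_pi_div_two _)
  have ht0 : 0 < t := lt_of_lt_of_le (div_pos hTpos hkc) ht
  by_contra hVt
  push_neg at hVt
  -- Step 1: V stays above R on all of [0, t].
  have hall : ∀ s ∈ Set.Icc (0:ℝ) t, R < V s := by
    by_contra hno
    push_neg at hno
    obtain ⟨s₁, hs₁, hVs₁⟩ := hno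
    set S := {s | s ∈ Set.Icc (0:ℝ) t ∧ V s ≤ R} with hSdef
    have hne : S.Nonempty := ⟨s₁, hs₁, hVs₁⟩
    have hbdd : BddAbove S := ⟨t, fun x hx => hx.1.2⟩
    have hclosed : IsClosed S := by
      have : S = Set.Icc (0:ℝ) t ∩ V ⁻¹' Set.Iic R := rfl
      rw [this]
      exact isClosed_Icc.inter (isClosed_Iic.preimage hVdiff.continuous)
    have hcmp : IsCompact S :=
      isCompact_Icc.of_isClosed_subset hclosed (fun x hx => hx.1)
    have hs₀S : sSup S ∈ S := hcmp.sSup_mem hne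
    set s₀ := sSup S with hs₀def
    have hs₀t : s₀ < t := lt_of_le_of_ne hs₀S.1.2 (by
      intro h
      exact absurd hs₀S.2 (not_le.mpr (h ▸ hVt)))
    have hmid : ∀ s ∈ Set.Ioc s₀ t, R < V s := by
      intro s hs
      by_contra hle
      push_neg at hle
      have hsS : s ∈ S := ⟨⟨le_trans hs₀S.1.1 hs.1.le, hs.2⟩, hle⟩
      exact absurd (le_csSup hbdd hsS) (not_le.mpr hs.1)
    have hanti : AntitoneOn V (Set.Icc s₀ t) := by
      apply antitoneOn_of_deriv_nonpos (convex_Icc _ _) hVdiff.continuous.continuousOn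
        (hVdiff.differentiableOn)
      intro x hx
      rw [interior_Icc] at hx
      have hx0 : (0:ℝ) ≤ x := le_trans hs₀S.1.1 hx.1.le
      have hxR : R < V x := hmid x ⟨hx.1, hx.2.le⟩
      have hVx : 0 < V x := hR.trans hxR
      have h1 := hdrift x hx0 hxR
      have h2 : 0 < a * V x ^ p + b * V x ^ (2 - p) := by positivity
      linarith
    have := hanti (Set.left_mem_Icc.mpr hs₀t.le) (Set.right_mem_Icc.mpr hs₀t.le) hs₀t.le
    exact absurd (le_trans this hs₀S.2) (not_le.mpr hVt)
  -- Step 2: the arctan Lyapunov function decreases at rate (1-p)c.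
  set h : ℝ → ℝ := fun s => Real.arctan (K * V s ^ (1 - p)) + (1 - p) * c * s with hhdef
  have hcont : Continuous h := by
    apply Continuous.add
    · exact Real.continuous_arctan.comp
        (continuous_const.mul (hVdiff.continuous.rpow_const (fun x => Or.inr hk.le)))
    · exact (continuous_const.mul continuous_id)
  have hderivh : ∀ x ∈ Set.Ioo (0:ℝ) t, HasDerivAt h
      ((1 / (1 + (K * V x ^ (1 - p)) ^ 2)) *
        (K * ((1 - p) * V x ^ ((1 - p) - 1) * deriv V x)) + (1 - p) * c) x := by
    intro x hx
    have hVx : 0 < V x := hR.trans (hall x ⟨hx.1.le, hx.2.le⟩)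
    have hd1 : HasDerivAt (fun s => V s ^ (1 - p))
        ((1 - p) * V x ^ ((1 - p) - 1) * deriv V x) x := by
      have := (hVdiff x).hasDerivAt.rpow_const (p := 1 - p) (Or.inl (ne_of_gt hVx))
      convert this using 1
      ring
    have hd2 : HasDerivAt (fun s => K * V s ^ (1 - p))
        (K * ((1 - p) * V x ^ ((1 - p) - 1) * deriv V x)) x := hd1.const_mul K
    have hd3 := (Real.hasDerivAt_arctan (K * V x ^ (1 - p))).comp x hd2
    have hd4 : HasDerivAt (fun s => (1 - p) * c * s) ((1 - p) * c) x := by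
      simpa using (hasDerivAt_id x).const_mul ((1 - p) * c)
    exact hd3.add hd4
  have hantih : AntitoneOn h (Set.Icc 0 t) := by
    apply antitoneOn_of_deriv_nonpos (convex_Icc _ _) hcont.continuousOn
    · intro x hx
      rw [interior_Icc] at hx
      exact (hderivh x hx).differentiableAt.differentiableWithinAt
    · intro x hx
      rw [interior_Icc] at hx
      rw [(hderivh x hx).deriv]
      have hVx : 0 < V x := hR.trans (hall x ⟨hx.1.le, hx.2.le⟩)
      have hdr := hdrift x hx.1.le (hall x ⟨hx.1.le, hx.2.le⟩)
      set F := (1 / (1 + (K * V x ^ (1 - p)) ^ 2)) * (K * ((1 - p) * V x ^ ((1 - p) - 1)))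
        with hFdef
      have hF : 0 ≤ F := by
        have : 0 < V x ^ ((1 - p) - 1) := Real.rpow_pos_of_pos hVx _
        positivity
      have heq1 : (1 / (1 + (K * V x ^ (1 - p)) ^ 2)) *
          (K * ((1 - p) * V x ^ ((1 - p) - 1) * deriv V x)) = F * deriv V x := by
        rw [hFdef]; ring
      have heq2 : F * (a * V x ^ p + b * V x ^ (2 - p)) = (1 - p) * c := by
        rw [hFdef, ← key_alg p a b (V x) hp hp1 ha hb hVx]
        ring
      rw [heq1]
      have hmul : F * deriv V x ≤ F * (-(a * V x ^ p + b * V x ^ (2 - p))) :=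
        mul_le_mul_of_nonneg_left hdr hF
      have : F * (-(a * V x ^ p + b * V x ^ (2 - p))) = -((1 - p) * c) := by
        rw [← heq2]; ring
      linarith
  have hht := hantih (Set.left_mem_Icc.mpr ht0.le) (Set.right_mem_Icc.mpr ht0.le) ht0.le
  -- unfold h 0 and h t
  have hh0 : h 0 = Real.arctan (K * V 0 ^ (1 - p)) := by simp [hhdef]
  have hhT : h t = Real.arctan (K * V t ^ (1 - p)) + (1 - p) * c * t := rfl
  have harc0 : Real.arctan (K * V 0 ^ (1 - p)) < π / 2 := Real.arctan_lt_pi_div_two _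
  have hkct : π / 2 - Real.arctan (K * R ^ (1 - p)) ≤ (1 - p) * c * t := by
    rw [div_le_iff₀ hkc] at ht
    linarith [ht]
  have harcR : Real.arctan (K * R ^ (1 - p)) < Real.arctan (K * V t ^ (1 - p)) := by
    apply Real.arctan_strictMono
    exact mul_lt_mul_of_pos_left (Real.rpow_lt_rpow hR.le hVt hk) hK
  rw [hhT, hh0] at hht
  linarith

/-- Lemma 2: sharpened settling-time estimate in the case `p + q = 2`. -/
theorem fixed_time_settling_time_p_add_q_eq_two
    (p q μ₁ μ₂ μ₃ τ : ℝ)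
    (hp : 0 < p) (hp1 : p < 1) (hq : 1 < q) (hpq : p + q = 2)
    (hμ₁ : 0 < μ₁) (hμ₂ : 0 < μ₂) (hμ₃ : 0 < μ₃)
    (hτ : τ ∈ Set.Ioo (0 : ℝ) 1)
    (V : ℝ → ℝ) (hVdiff : Differentiable ℝ V)
    (hVnonneg : ∀ t, 0 ≤ t → 0 ≤ V t)
    (hVineq : ∀ t, 0 ≤ t →
      deriv V t ≤ -μ₁ * (V t) ^ p - μ₂ * (V t) ^ q + μ₃) :
    ∀ t,
      (1 / ((1 - p) * Real.sqrt (τ * μ₁ * μ₂))) *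
        max (π / 2 - Real.arctan (Real.sqrt (μ₂ / (τ * μ₁)) *
              (μ₃ / ((1 - τ) * μ₁)) ^ ((1 - p) / p)))
            (π / 2 - Real.arctan (Real.sqrt (τ * μ₂ / μ₁) *
              (μ₃ / ((1 - τ) * μ₂)) ^ ((1 - p) / (2 - p))))
        ≤ t →
      V t ≤ min ((μ₃ / ((1 - τ) * μ₁)) ^ (1 / p))
                ((μ₃ / ((1 - τ) * μ₂)) ^ (1 / q)) := by
  have hq2 : q = 2 - p := by linarith
  subst hq2
  obtain ⟨hτ0, hτ1⟩ := hτ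
  have h1τ : (0:ℝ) < 1 - τ := by linarith
  have hk : (0:ℝ) < 1 - p := by linarith
  have hX : (0:ℝ) < μ₃ / ((1 - τ) * μ₁) := div_pos hμ₃ (mul_pos h1τ hμ₁)
  have hY : (0:ℝ) < μ₃ / ((1 - τ) * μ₂) := div_pos hμ₃ (mul_pos h1τ hμ₂)
  set X := μ₃ / ((1 - τ) * μ₁) with hXdef
  set Y := μ₃ / ((1 - τ) * μ₂) with hYdef
  set R₁ := X ^ (1 / p) with hR₁def
  set R₂ := Y ^ (1 / (2 - p)) with hR₂def
  have hR₁ : 0 < R₁ := Real.rpow_pos_of_pos hX _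
  have hR₂ : 0 < R₂ := Real.rpow_pos_of_pos hY _
  have hR₁p : R₁ ^ p = X := by
    rw [hR₁def, ← Real.rpow_mul hX.le, one_div, inv_mul_cancel₀ (ne_of_gt hp), Real.rpow_one]
  have hR₂q : R₂ ^ (2 - p) = Y := by
    rw [hR₂def, ← Real.rpow_mul hY.le, one_div, inv_mul_cancel₀ (by linarith : (2:ℝ) - p ≠ 0),
      Real.rpow_one]
  have hR₁k : X ^ ((1 - p) / p) = R₁ ^ (1 - p) := by
    rw [hR₁def, ← Real.rpow_mul hX.le]
    congr 1; field_simp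
  have hR₂k : Y ^ ((1 - p) / (2 - p)) = R₂ ^ (1 - p) := by
    rw [hR₂def, ← Real.rpow_mul hY.le]
    congr 1; field_simp
  have hcpos : (0:ℝ) < (1 - p) * Real.sqrt (τ * μ₁ * μ₂) :=
    mul_pos hk (Real.sqrt_pos.mpr (by positivity))
  intro t ht
  rcases le_or_gt R₁ R₂ with h12 | h21
  · -- min is R₁ : use a = τμ₁, b = μ₂
    have hab : τ * μ₁ * μ₂ = (τ * μ₁) * μ₂ := by ring
    have hdrift : ∀ s, 0 ≤ s → R₁ < V s →
        deriv V s ≤ -((τ * μ₁) * V s ^ p + μ₂ * V s ^ (2 - p)) := by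
      intro s hs hlt
      have h1 := hVineq s hs
      have h2 : X < V s ^ p := by
        rw [← hR₁p]; exact Real.rpow_lt_rpow hR₁.le hlt hp
      have h3 : μ₃ < V s ^ p * ((1 - τ) * μ₁) := by
        rw [hXdef] at h2
        exact (div_lt_iff₀ (mul_pos h1τ hμ₁)).mp h2
      nlinarith [h1, h3]
    have haux := settling_aux p (τ * μ₁) μ₂ R₁ hp hp1 (mul_pos hτ0 hμ₁) hμ₂ hR₁ V hVdiff hdrift t
    have hT : (π / 2 - Real.arctan (Real.sqrt (μ₂ / (τ * μ₁)) * R₁ ^ (1 - p))) /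
        ((1 - p) * Real.sqrt ((τ * μ₁) * μ₂)) ≤ t := by
      rw [← hab, ← hR₁k, div_eq_mul_one_div, mul_comm]
      calc (1 / ((1 - p) * Real.sqrt (τ * μ₁ * μ₂))) *
            (π / 2 - Real.arctan (Real.sqrt (μ₂ / (τ * μ₁)) * X ^ ((1 - p) / p)))
          ≤ (1 / ((1 - p) * Real.sqrt (τ * μ₁ * μ₂))) *
            max (π / 2 - Real.arctan (Real.sqrt (μ₂ / (τ * μ₁)) * X ^ ((1 - p) / p)))
                (π / 2 - Real.arctan (Real.sqrt (τ * μ₂ / μ₁) * Y ^ ((1 - p) / (2 - p)))) := by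
            apply mul_le_mul_of_nonneg_left (le_max_left _ _)
            positivity
        _ ≤ t := ht
    have hVle := haux (by rw [← hab] at hT ⊢; exact hT)
    exact le_min hVle (hVle.trans h12)
  · -- min is R₂ : use a = μ₁, b = τμ₂
    have hab : Real.sqrt (μ₁ * (τ * μ₂)) = Real.sqrt (τ * μ₁ * μ₂) := by
      congr 1; ring
    have hdrift : ∀ s, 0 ≤ s → R₂ < V s →
        deriv V s ≤ -(μ₁ * V s ^ p + (τ * μ₂) * V s ^ (2 - p)) := by
      intro s hs hlt
      have h1 := hVineq s hs
      have h2 : Y < V s ^ (2 - p) := by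
        rw [← hR₂q]; exact Real.rpow_lt_rpow hR₂.le hlt (by linarith)
      have h3 : μ₃ < V s ^ (2 - p) * ((1 - τ) * μ₂) := by
        rw [hYdef] at h2
        exact (div_lt_iff₀ (mul_pos h1τ hμ₂)).mp h2
      nlinarith [h1, h3]
    have haux := settling_aux p μ₁ (τ * μ₂) R₂ hp hp1 hμ₁ (mul_pos hτ0 hμ₂) hR₂ V hVdiff hdrift t
    have hT : (π / 2 - Real.arctan (Real.sqrt ((τ * μ₂) / μ₁) * R₂ ^ (1 - p))) /
        ((1 - p) * Real.sqrt (μ₁ * (τ * μ₂))) ≤ t := by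
      rw [hab, ← hR₂k, div_eq_mul_one_div, mul_comm]
      calc (1 / ((1 - p) * Real.sqrt (τ * μ₁ * μ₂))) *
            (π / 2 - Real.arctan (Real.sqrt (τ * μ₂ / μ₁) * Y ^ ((1 - p) / (2 - p))))
          ≤ (1 / ((1 - p) * Real.sqrt (τ * μ₁ * μ₂))) *
            max (π / 2 - Real.arctan (Real.sqrt (μ₂ / (τ * μ₁)) * X ^ ((1 - p) / p)))
                (π / 2 - Real.arctan (Real.sqrt (τ * μ₂ / μ₁) * Y ^ ((1 - p) / (2 - p)))) := by
            apply mul_le_mul_of_nonneg_left (le_max_right _ _)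
            positivity
        _ ≤ t := ht
    have hVle := haux hT
    exact le_min (hVle.trans h21.le) hVle
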